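/- Let (Γ, α) be an abstract GKM₃ graph with a quaternionic structure such that every quaternionic 2-face is a biangle or a noncomplex triangle, and every complex 2-face is one of the following: a triangle; a quadrangle admitting a compatible signed structure (γ_k) with γ_{k+2} = −γ_k (indices modulo 4); or a hexagon admitting a compatible signed structure (γ_k) with γ_{k+2} = γ_{k+1} − γ_k (indices modulo 6). Then Γ has no complex 2-face that is a hexagon. -/

import Mathlib

namespace GKMQ

/-- `x` equals `y` up to sign (`x` is a "lift" of the class of `y` mod sign). -/
def PM {m : ℕ} (x y : Fin m → ℤ) : Prop := x = y ∨ x = -y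

/-- coefficientwise coercion of an integer vector to `ℚ`. -/
def ratQ {m : ℕ} (x : Fin m → ℤ) : Fin m → ℚ := fun i => (x i : ℚ)

/-- An abstract graph: finite vertex and oriented-edge sets, a fixed-point-free
orientation-reversal involution `bar`, no loops; multiple edges are allowed. -/
structure Graph where
  V : Type
  E : Type
  fintypeV : Fintype V
  fintypeE : Fintype E
  src : E → V
  bar : E → E
  bar_invol : ∀ e, bar (bar e) = e
  bar_ne : ∀ e, bar e ≠ e
  no_loop : ∀ e, src (bar e) ≠ src e

/-- The terminal vertex of an oriented edge. -/
def Graph.tgt (G : Graph) (e : G.E) : G.V := G.src (G.bar e)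

/-- A connection on a graph; `map e` is a bijection `E_{i(e)} → E_{t(e)}` with
`∇_e e = ē` and `∇_{ē} = (∇_e)⁻¹` (its values outside `E_{i(e)}` are irrelevant). -/
structure Connection (G : Graph) where
  map : G.E → G.E → G.E
  map_src : ∀ e f, G.src f = G.src e → G.src (map e f) = G.tgt e
  map_self : ∀ e, map e e = G.bar e
  map_bar : ∀ e f, G.src f = G.src e → map (G.bar e) (map e f) = f

/-- Compatibility of a connection with an edge labeling (mod sign): for every edge `e`
and `f ∈ E_{i(e)}` there are lifts of the labels of `f` and `∇_e f` differing by an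
integer multiple of the label of `e`. -/
def CompatibleConn (G : Graph) {m : ℕ} (label : G.E → (Fin m → ℤ)) (C : Connection G) :
    Prop :=
  ∀ e f, G.src f = G.src e →
    ∃ x y : Fin m → ℤ, PM x (label f) ∧ PM y (label (C.map e f)) ∧
      ∃ c : ℤ, y = x + c • label e

/-- An axial function with values in `ℤ^m` modulo sign; `label` is a choice of
representatives, so that all labels are well defined up to sign. -/
structure Axial (G : Graph) (m : ℕ) where
  label : G.E → (Fin m → ℤ)
  label_bar : ∀ e, PM (label (G.bar e)) (label e)
  indep₂ : ∀ e f, G.src f = G.src e → e ≠ f →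
    LinearIndependent ℚ ![ratQ (label e), ratQ (label f)]
  exists_compat : ∃ C : Connection G, CompatibleConn G label C

/-- The GKM_k condition: at every vertex, any `k` of the labels are linearly
independent over `ℚ`. -/
def Axial.IsGKM {G : Graph} {m : ℕ} (A : Axial G m) (k : ℕ) : Prop :=
  ∀ v : G.V, ∀ s : Finset G.E, (∀ e ∈ s, G.src e = v) → s.card = k →
    LinearIndependent ℚ (fun e : {x // x ∈ s} => ratQ (A.label e.1))

/-- A full quaternionically compatible family of lifts at a vertex `v`: `L` assigns to
every edge at `v` a lift of its label, `ℓ` is a lift of the quaternionic weight, and the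
lifts of each quaternionic pair sum to `ℓ`. -/
def QFam (G : Graph) {m : ℕ} (label : G.E → (Fin m → ℤ)) (lam : G.V → (Fin m → ℤ))
    (qpair : G.E → G.E) (v : G.V) (L : G.E → (Fin m → ℤ)) (ℓ : Fin m → ℤ) : Prop :=
  PM ℓ (lam v) ∧ ∀ e, G.src e = v → PM (L e) (label e) ∧ L e + L (qpair e) = ℓ

/-- A partial family `s` of lifts, together with a lift `ℓ` of the quaternionic weight
at `v`, is quaternionically compatible if it extends to a full family. -/
def QCompat (G : Graph) {m : ℕ} (label : G.E → (Fin m → ℤ)) (lam : G.V → (Fin m → ℤ))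
    (qpair : G.E → G.E) (v : G.V) (s : List (G.E × (Fin m → ℤ))) (ℓ : Fin m → ℤ) :
    Prop :=
  ∃ L, QFam G label lam qpair v L ℓ ∧ ∀ p ∈ s, L p.1 = p.2

/-- Condition (2) in the definition of a quaternionic structure on a GKM graph. -/
def QuatCondTwo (G : Graph) {m : ℕ} (label : G.E → (Fin m → ℤ))
    (lam : G.V → (Fin m → ℤ)) (qpair : G.E → G.E) : Prop :=
  ∃ C : Connection G, CompatibleConn G label C ∧
    (∀ e f, G.src f = G.src e → C.map e (qpair f) = qpair (C.map e f)) ∧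
    ∀ e xe lv, QCompat G label lam qpair (G.src e) [(e, xe)] lv →
      ∃ lw, (∃ c : ℤ, lw = lv + c • label e) ∧
        QCompat G label lam qpair (G.tgt e) [(G.bar e, -xe)] lw ∧
        ∀ f, G.src f = G.src e → ∀ xf,
          QCompat G label lam qpair (G.src e) [(e, xe), (f, xf)] lv →
          ∀ y, PM y (label (C.map e f)) → (∃ c : ℤ, y = xf + c • label e) →
            QCompat G label lam qpair (G.tgt e) [(G.bar e, -xe), (C.map e f, y)] lw

/-- A quaternionic structure on an abstract GKM graph: a quaternionic weight (mod sign)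
at every vertex, and a grouping of the edges at each vertex into quaternionic pairs,
subject to conditions (1) (`pair_sum`) and (2) (`cond₂`). -/
structure QuatStructure (G : Graph) {m : ℕ} (A : Axial G m) where
  lam : G.V → (Fin m → ℤ)
  qpair : G.E → G.E
  qpair_src : ∀ e, G.src (qpair e) = G.src e
  qpair_ne : ∀ e, qpair e ≠ e
  qpair_invol : ∀ e, qpair (qpair e) = e
  pair_sum : ∀ e, ∃ x y : Fin m → ℤ, PM x (A.label e) ∧ PM y (A.label (qpair e)) ∧
    PM (x + y) (lam (G.src e))
  cond₂ : QuatCondTwo G A.label lam qpair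

/-- Auxiliary function: consecutive pairs of edges of a connection path. -/
def connAux (G : Graph) (C : Connection G) (e₁ e₂ : G.E) : ℕ → G.E × G.E
  | 0 => (e₁, e₂)
  | n + 1 =>
    let p := connAux G C e₁ e₂ n
    (p.2, C.map p.2 (G.bar p.1))

/-- The connection path with prescribed first two edges `e₁, e₂` (where `t(e₁) = i(e₂)`):
`g 0 = e₁`, `g 1 = e₂`, `g (k+2) = ∇_{g (k+1)} (bar (g k))`. -/
def connPathFrom (G : Graph) (C : Connection G) (e₁ e₂ : G.E) (k : ℕ) : G.E :=
  (connAux G C e₁ e₂ k).1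

/-- The connection path through two edges `e, f` starting at the same vertex:
`g 0 = e`, `g 1 = ∇_e f`, `g (k+2) = ∇_{g (k+1)} (bar (g k))`. -/
def connPath (G : Graph) (C : Connection G) (e f : G.E) : ℕ → G.E :=
  connPathFrom G C e (C.map e f)

def IsPeriod {α : Type*} (g : ℕ → α) (N : ℕ) : Prop := 0 < N ∧ ∀ k, g (k + N) = g k

/-- `N` is the minimal period of the sequence `g`. -/
def MinPeriod {α : Type*} (g : ℕ → α) (N : ℕ) : Prop :=
  IsPeriod g N ∧ ∀ N', IsPeriod g N' → N ≤ N'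

/-- A 2-face (given by its connection path `g`) is quaternionic if at each of its
vertices the two edges of the face based there form a quaternionic pair. -/
def IsQuatPath (G : Graph) {m : ℕ} {A : Axial G m} (Q : QuatStructure G A)
    (g : ℕ → G.E) : Prop :=
  ∀ k, Q.qpair (g (k + 1)) = G.bar (g k)

/-- A noncomplex triangle: a quaternionic 2-face which is a triangle with labels
`±a, ±λ, ±(λ-a)` and quaternionic weights `±λ, ±(λ-a), ±a` at its three vertices. -/
def IsNoncomplexTriangle (G : Graph) {m : ℕ} {A : Axial G m} (Q : QuatStructure G A)
    (g : ℕ → G.E) : Prop :=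
  MinPeriod g 3 ∧ IsQuatPath G Q g ∧
  ∃ a l : Fin m → ℤ,
    PM (A.label (g 0)) a ∧ PM (A.label (g 1)) l ∧ PM (A.label (g 2)) (l - a) ∧
    PM (Q.lam (G.src (g 0))) l ∧ PM (Q.lam (G.src (g 1))) (l - a) ∧
    PM (Q.lam (G.src (g 2))) a

/-- Hypothesis (H): a GKM₃ graph with quaternionic structure all of whose quaternionic
2-faces are biangles or noncomplex triangles and all of whose complex 2-faces are
triangles or quadrangles. -/
def HypH (G : Graph) {m : ℕ} (A : Axial G m) (Q : QuatStructure G A) : Prop :=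
  A.IsGKM 3 ∧
  ∀ C : Connection G, CompatibleConn G A.label C →
    ∀ e f, G.src f = G.src e → f ≠ e →
      ∀ N, MinPeriod (connPath G C e f) N →
        (IsQuatPath G Q (connPath G C e f) →
          N = 2 ∨ IsNoncomplexTriangle G Q (connPath G C e f)) ∧
        (¬ IsQuatPath G Q (connPath G C e f) → N = 3 ∨ N = 4)

/-- A compatible signed structure on a 2-face with edges `g 0, …, g (N-1)`
(indices mod `N`): lifts `γ k` of the labels `α (g k)` such that consecutive lifts
satisfy the connection congruence and are quaternionically compatible at each vertex. -/
def SignedStructureOn (G : Graph) {m : ℕ} (A : Axial G m) (Q : QuatStructure G A)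
    (g : ℕ → G.E) (N : ℕ) (γ : ℕ → (Fin m → ℤ)) : Prop :=
  (∀ k, γ (k + N) = γ k) ∧
  (∀ k, PM (γ k) (A.label (g k))) ∧
  (∀ k, ∃ c : ℤ, γ (k + 2) + γ k = c • γ (k + 1)) ∧
  (∀ k, ∃ ℓ, QCompat G A.label Q.lam Q.qpair (G.tgt (g k))
      [(G.bar (g k), -(γ k)), (g (k + 1), γ (k + 1))] ℓ)

/-- The raw data of a GKM graph with quaternionic structure: vertices, oriented edges,
labels, quaternionic weights (both as chosen representatives mod sign) and quaternionic
pairs. -/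
structure QData (m : ℕ) where
  V : Type
  E : Type
  src : E → V
  bar : E → E
  label : E → (Fin m → ℤ)
  lam : V → (Fin m → ℤ)
  qpair : E → E

/-- The quaternionic GKM data underlying a GKM graph with quaternionic structure. -/
def toQData (G : Graph) {m : ℕ} (A : Axial G m) (Q : QuatStructure G A) : QData m :=
  ⟨G.V, G.E, G.src, G.bar, A.label, Q.lam, Q.qpair⟩

/-- An isomorphism of GKM graphs with quaternionic structure: bijections of vertices and
oriented edges commuting with `src`, `bar` and the quaternionic pairing, and preserving
the labels and the quaternionic weights up to sign. -/
structure QIso {m : ℕ} (D₁ D₂ : QData m) where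
  vmap : D₁.V ≃ D₂.V
  emap : D₁.E ≃ D₂.E
  src_comm : ∀ e, D₂.src (emap e) = vmap (D₁.src e)
  bar_comm : ∀ e, D₂.bar (emap e) = emap (D₁.bar e)
  label_pm : ∀ e, PM (D₂.label (emap e)) (D₁.label e)
  lam_pm : ∀ v, PM (D₂.lam (vmap v)) (D₁.lam v)
  qpair_comm : ∀ e, D₂.qpair (emap e) = emap (D₁.qpair e)

/-- The model graph `Γ_{ℍP}(λ; β₀, …, β_n)` of a torus action on `ℍPⁿ`: vertices
`0, …, n`, two edges between any two distinct vertices `k, l`, labeled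
`±(β_k - β_l)` and `±(λ - β_k - β_l)`, quaternionic weight `±(λ - 2β_k)` at `k`,
the two edges of each biangle forming a quaternionic pair. -/
def modelHP (n : ℕ) {m : ℕ} (lam₀ : Fin m → ℤ) (β : Fin (n + 1) → (Fin m → ℤ)) :
    QData m where
  V := Fin (n + 1)
  E := {p : Fin (n + 1) × Fin (n + 1) // p.1 ≠ p.2} × Bool
  src e := e.1.1.1
  bar e := (⟨(e.1.1.2, e.1.1.1), Ne.symm e.1.2⟩, e.2)
  label e := if e.2 then lam₀ - β e.1.1.1 - β e.1.1.2 else β e.1.1.1 - β e.1.1.2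
  lam k := lam₀ - (2 : ℤ) • β k
  qpair e := (e.1, !e.2)

/-- The 2-element subset `{i, j}` (`i ≠ j`) realized as a sorted pair. -/
def uPair {n : ℕ} (i j : Fin n) (h : i ≠ j) : {p : Fin n × Fin n // p.1 < p.2} :=
  if hlt : i < j then ⟨(i, j), hlt⟩ else ⟨(j, i), h.lt_or_gt.resolve_left hlt⟩

/-- The model graph `Γ_{Gr}(β₁, …, β_n)` of a torus action on `Gr₂(ℂⁿ)`: vertices the
2-element subsets of `{1, …, n}`; an oriented edge `(i, j, k)` from `{i, j}` to `{i, k}`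
for `j ≠ k`, labeled `±(β_j - β_k)`; quaternionic weight `±(β_i - β_j)` at `{i, j}`;
the edges `(i, j, k)` and `(j, i, k)` forming a quaternionic pair at `{i, j}`. -/
def modelGr (n : ℕ) {m : ℕ} (β : Fin n → (Fin m → ℤ)) : QData m where
  V := {p : Fin n × Fin n // p.1 < p.2}
  E := {t : Fin n × Fin n × Fin n // t.1 ≠ t.2.1 ∧ t.1 ≠ t.2.2 ∧ t.2.1 ≠ t.2.2}
  src e := uPair e.1.1 e.1.2.1 e.2.1
  bar e := ⟨(e.1.1, e.1.2.2, e.1.2.1), e.2.2.1, e.2.1, Ne.symm e.2.2.2⟩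
  label e := β e.1.2.1 - β e.1.2.2
  lam v := β v.1.1 - β v.1.2
  qpair e := ⟨(e.1.2.1, e.1.1, e.1.2.2), Ne.symm e.2.1, e.2.2.2, e.2.2.1⟩

/-- A subgraph (with quaternionic structure) of a GKM graph with quaternionic
structure: sets of vertices and of oriented edges closed under `src`, `bar` and the
quaternionic pairing. -/
structure SubData (G : Graph) {m : ℕ} (A : Axial G m) (Q : QuatStructure G A) where
  W : Set G.V
  F : Set G.E
  src_mem : ∀ e ∈ F, G.src e ∈ W
  bar_mem : ∀ e ∈ F, G.bar e ∈ F
  qpair_mem : ∀ e ∈ F, Q.qpair e ∈ F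

/-- The quaternionic GKM data induced on a subgraph. -/
def SubData.toQData {G : Graph} {m : ℕ} {A : Axial G m} {Q : QuatStructure G A}
    (S : SubData G A Q) : QData m where
  V := S.W
  E := S.F
  src e := ⟨G.src e.1, S.src_mem e.1 e.2⟩
  bar e := ⟨G.bar e.1, S.bar_mem e.1 e.2⟩
  label e := A.label e.1
  lam v := Q.lam v.1
  qpair e := ⟨Q.qpair e.1, S.qpair_mem e.1 e.2⟩


/-! ### Auxiliary lemmas -/

section AuxPM

variable {m : ℕ}

lemma pm_refl (x : Fin m → ℤ) : PM x x := Or.inl rfl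

lemma pm_swap {x y : Fin m → ℤ} (h : PM x y) : PM y x := by
  rcases h with h | h
  · exact Or.inl h.symm
  · exact Or.inr (by rw [h, neg_neg])

lemma pm_trans {x y z : Fin m → ℤ} (h1 : PM x y) (h2 : PM y z) : PM x z := by
  rcases h1 with h1 | h1 <;> rcases h2 with h2 | h2
  · exact Or.inl (h1.trans h2)
  · exact Or.inr (h1.trans h2)
  · exact Or.inr (by rw [h1, h2])
  · exact Or.inl (by rw [h1, h2, neg_neg])

lemma pm_ex {x y : Fin m → ℤ} (h : PM x y) : ∃ s : ℤ, (s = 1 ∨ s = -1) ∧ x = s • y := by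
  rcases h with h | h
  · exact ⟨1, Or.inl rfl, by simpa using h⟩
  · exact ⟨-1, Or.inr rfl, by simpa [neg_smul] using h⟩

lemma pm_of_ex {x y : Fin m → ℤ} (s : ℤ) (hs : s = 1 ∨ s = -1) (h : x = s • y) : PM x y := by
  rcases hs with rfl | rfl
  · exact Or.inl (by simpa using h)
  · exact Or.inr (by simpa [neg_smul] using h)

lemma sflip {x y : Fin m → ℤ} {s : ℤ} (hs : s = 1 ∨ s = -1) (h : x = s • y) : y = s • x := by
  rcases hs with rfl | rfl
  · simpa using h.symm
  · rw [h]; simp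

lemma pm_pm {x y w : Fin m → ℤ} (h1 : PM x w) (h2 : PM y w) :
    ∃ s : ℤ, (s = 1 ∨ s = -1) ∧ x = s • y := by
  obtain ⟨s1, hs1, e1⟩ := pm_ex h1
  obtain ⟨s2, hs2, e2⟩ := pm_ex h2
  refine ⟨s1 * s2, by rcases hs1 with rfl | rfl <;> rcases hs2 with rfl | rfl <;> simp, ?_⟩
  rw [e1, e2, smul_smul]
  congr 1
  rcases hs2 with rfl | rfl <;> ring

lemma int_pm_of_mul {a b cc : ℤ} (hc : cc = 1 ∨ cc = -1) (h : a * b = cc) :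
    a = 1 ∨ a = -1 := by
  have hu : IsUnit (a * b) := by
    rcases hc with rfl | rfl <;> rw [h]
    · exact isUnit_one
    · exact isUnit_one.neg
  exact Int.isUnit_iff.mp (isUnit_of_mul_isUnit_left hu)

/-- Integral linear independence of a triple of integer vectors. -/
def I3 (x y z : Fin m → ℤ) : Prop :=
  ∀ p q r : ℤ, p • x + q • y + r • z = 0 → p = 0 ∧ q = 0 ∧ r = 0

lemma I3.coords {x y z : Fin m → ℤ} (h : I3 x y z) {p₁ q₁ r₁ p₂ q₂ r₂ : ℤ}
    (heq : p₁ • x + q₁ • y + r₁ • z = p₂ • x + q₂ • y + r₂ • z) :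
    p₁ = p₂ ∧ q₁ = q₂ ∧ r₁ = r₂ := by
  have h0 : (p₁ - p₂) • x + (q₁ - q₂) • y + (r₁ - r₂) • z = 0 := by
    have e : (p₁ - p₂) • x + (q₁ - q₂) • y + (r₁ - r₂) • z
        = (p₁ • x + q₁ • y + r₁ • z) - (p₂ • x + q₂ • y + r₂ • z) := by module
    rw [e, heq, sub_self]
  have h' := h _ _ _ h0
  omega

lemma I3.congr {x y z x' y' z' : Fin m → ℤ} (h : I3 x y z) {sx sy sz : ℤ}
    (hsx : sx = 1 ∨ sx = -1) (hsy : sy = 1 ∨ sy = -1) (hsz : sz = 1 ∨ sz = -1)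
    (hx : x' = sx • x) (hy : y' = sy • y) (hz : z' = sz • z) : I3 x' y' z' := by
  intro p q r hpqr
  rw [hx, hy, hz, smul_smul, smul_smul, smul_smul] at hpqr
  have h' := h _ _ _ hpqr
  rcases hsx with rfl | rfl <;> rcases hsy with rfl | rfl <;> rcases hsz with rfl | rfl <;> omega

lemma I3.adjust {x y z w : Fin m → ℤ} (h : I3 x y w) (a b : ℤ)
    (hw : w = z + a • x + b • y) : I3 x y z := by
  intro p q r hpqr
  have e : (p - r * a) • x + (q - r * b) • y + r • w = p • x + q • y + r • z := by
    rw [hw]; module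
  rw [hpqr] at e
  obtain ⟨h1, h2, h3⟩ := h _ _ _ e
  subst h3
  simp only [zero_mul, sub_zero] at h1 h2
  exact ⟨h1, h2, rfl⟩

end AuxPM

section AuxGraph

lemma src_bar (G : Graph) (e : G.E) : G.src (G.bar e) = G.tgt e := rfl

lemma tgt_bar (G : Graph) (e : G.E) : G.tgt (G.bar e) = G.src e := by
  show G.src (G.bar (G.bar e)) = G.src e
  rw [G.bar_invol]

lemma bar_inj (G : Graph) {e₁ e₂ : G.E} (h : G.bar e₁ = G.bar e₂) : e₁ = e₂ := by
  have := congrArg G.bar h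
  rwa [G.bar_invol, G.bar_invol] at this

variable (G : Graph) (C : Connection G)

lemma connPath_zero (x y : G.E) : connPath G C x y 0 = x := rfl

lemma connPath_one (x y : G.E) : connPath G C x y 1 = C.map x y := rfl

lemma connPath_rec (x y : G.E) (k : ℕ) :
    connPath G C x y (k + 2)
      = C.map (connPath G C x y (k + 1)) (G.bar (connPath G C x y k)) := rfl

lemma connAux_src (x y : G.E) (hxy : G.src y = G.src x) :
    ∀ k, G.src ((connAux G C x (C.map x y) k).2) = G.tgt ((connAux G C x (C.map x y) k).1)
  | 0 => C.map_src x y hxy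
  | (k+1) => by
    have ih := connAux_src x y hxy k
    show G.src (C.map (connAux G C x (C.map x y) k).2
        (G.bar (connAux G C x (C.map x y) k).1)) = _
    rw [C.map_src _ _ ih.symm]
    rfl

lemma connPath_src (x y : G.E) (hxy : G.src y = G.src x) (k : ℕ) :
    G.src (connPath G C x y (k + 1)) = G.tgt (connPath G C x y k) :=
  connAux_src G C x y hxy k

lemma conn_inj {e f₁ f₂ : G.E} (h1 : G.src f₁ = G.src e) (h2 : G.src f₂ = G.src e)
    (h : C.map e f₁ = C.map e f₂) : f₁ = f₂ := by
  have := C.map_bar e f₁ h1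
  rw [h, C.map_bar e f₂ h2] at this
  exact this.symm

end AuxGraph

section AuxGKM

variable {G : Graph} {m : ℕ} {A : Axial G m}

lemma gkm3_i3 (h₃ : A.IsGKM 3) (e₁ e₂ e₃ : G.E)
    (h12 : e₁ ≠ e₂) (h13 : e₁ ≠ e₃) (h23 : e₂ ≠ e₃)
    (hs2 : G.src e₂ = G.src e₁) (hs3 : G.src e₃ = G.src e₁) :
    I3 (A.label e₁) (A.label e₂) (A.label e₃) := by
  classical
  intro p q r hpqr
  set s : Finset G.E := {e₁, e₂, e₃} with hs
  have hmem : ∀ x ∈ s, G.src x = G.src e₁ := by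
    intro x hx
    rw [hs] at hx
    simp only [Finset.mem_insert, Finset.mem_singleton] at hx
    rcases hx with rfl | rfl | rfl
    · rfl
    · exact hs2
    · exact hs3
  have hcard : s.card = 3 := by
    rw [hs]
    rw [Finset.card_insert_of_notMem (by simp [h12, h13]),
      Finset.card_insert_of_notMem (by simp [h23]), Finset.card_singleton]
  have hli := h₃ (G.src e₁) s hmem hcard
  have m1 : e₁ ∈ s := by simp [hs]
  have m2 : e₂ ∈ s := by simp [hs]
  have m3 : e₃ ∈ s := by simp [hs]
  set fn : Fin 3 → {x // x ∈ s} := ![⟨e₁, m1⟩, ⟨e₂, m2⟩, ⟨e₃, m3⟩] with hfn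
  have hinj : Function.Injective fn := by
    intro a b hab
    have hab' : ((fn a : {x // x ∈ s}) : G.E) = ((fn b : {x // x ∈ s}) : G.E) := congrArg _ hab
    fin_cases a <;> fin_cases b <;>
      first
      | rfl
      | (exfalso
         simp only [hfn, Fin.isValue, Matrix.cons_val_zero, Matrix.cons_val_one,
           Matrix.head_cons, Matrix.cons_val_two, Matrix.tail_cons] at hab'
         first
         | exact h12 hab' | exact h13 hab' | exact h23 hab'
         | exact h12 hab'.symm | exact h13 hab'.symm | exact h23 hab'.symm)
  have hli3 : LinearIndependent ℚ (fun i => ratQ (A.label ((fn i) : G.E))) := hli.comp fn hinj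
  have hsum : ((p : ℚ) • ratQ (A.label e₁) + (q : ℚ) • ratQ (A.label e₂)
      + (r : ℚ) • ratQ (A.label e₃)) = 0 := by
    funext i
    have h0 := congrFun hpqr i
    simp only [Pi.add_apply, Pi.smul_apply, smul_eq_mul, Pi.zero_apply] at h0 ⊢
    simp only [ratQ]
    exact_mod_cast h0
  have hz := Fintype.linearIndependent_iff.mp hli3 ![(p : ℚ), (q : ℚ), (r : ℚ)] (by
    rw [Fin.sum_univ_three]
    simpa [hfn] using hsum)
  refine ⟨?_, ?_, ?_⟩
  · have := hz 0; simp at this; exact_mod_cast this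
  · have := hz 1; simp at this; exact_mod_cast this
  · have := hz 2; simp at this; exact_mod_cast this

end AuxGKM

section AuxConn

variable {G : Graph} {m : ℕ} {A : Axial G m}

/-- In a GKM₃ graph the compatible connection is unique. -/
lemma conn_unique (h₃ : A.IsGKM 3) (C C' : Connection G)
    (hC : CompatibleConn G A.label C) (hC' : CompatibleConn G A.label C') :
    ∀ x y, G.src y = G.src x → C.map x y = C'.map x y := by
  intro x y hxy
  by_contra hne
  rcases eq_or_ne y x with rfl | hyx
  · rw [C.map_self, C'.map_self] at hne; exact hne rfl
  set f₁ := C.map x y with hf₁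
  have hsf₁ : G.src f₁ = G.src (G.bar x) := by
    rw [src_bar]; exact C.map_src x y hxy
  set f'' := C'.map (G.bar x) f₁ with hf''
  have hsf'' : G.src f'' = G.src x := by
    rw [hf'', C'.map_src _ _ hsf₁, tgt_bar]
  have hmap'' : C'.map x f'' = f₁ := by
    have := C'.map_bar (G.bar x) f₁ hsf₁
    rwa [G.bar_invol] at this
  have hf''y : f'' ≠ y := by
    intro h; rw [h] at hmap''; exact hne hmap''.symm
  have hf''x : f'' ≠ x := by
    intro h
    rw [h, C'.map_self] at hmap''
    have : C.map x x = C.map x y := by rw [C.map_self, hmap'']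
    exact hyx (conn_inj G C rfl hxy this).symm
  obtain ⟨x₁, y₁, px₁, py₁, c₁, hc₁⟩ := hC x y hxy
  obtain ⟨x₂, y₂, px₂, py₂, c₂, hc₂⟩ := hC' x f'' hsf''
  rw [hmap''] at py₂
  have hI := gkm3_i3 h₃ x y f'' (Ne.symm hyx) (Ne.symm hf''x) (Ne.symm hf''y) hxy hsf''
  obtain ⟨s₁, hs₁, e₁⟩ := pm_ex px₁
  obtain ⟨s₂, hs₂, e₂⟩ := pm_ex px₂
  obtain ⟨s₃, hs₃, e₃⟩ := pm_pm py₁ py₂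
  -- y₁ = x₁ + c₁ • label x ; y₂ = x₂ + c₂ • label x ; y₁ = s₃ • y₂
  have key : (c₁ - s₃ * c₂) • A.label x + s₁ • A.label y + (-(s₃ * s₂)) • A.label f'' = 0 := by
    have e : (c₁ - s₃ * c₂) • A.label x + s₁ • A.label y + (-(s₃ * s₂)) • A.label f''
        = (x₁ + c₁ • A.label x) - s₃ • (x₂ + c₂ • A.label x) := by
      rw [e₁, e₂]; module
    rw [e, ← hc₁, ← hc₂, ← e₃, sub_self]
  have := hI _ _ _ key
  rcases hs₁ with rfl | rfl <;> omega

/-- Connection paths of two compatible connections agree. -/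
lemma connPath_unique (h₃ : A.IsGKM 3) (C C' : Connection G)
    (hC : CompatibleConn G A.label C) (hC' : CompatibleConn G A.label C')
    (x y : G.E) (hxy : G.src y = G.src x) :
    connPath G C x y = connPath G C' x y := by
  have hu := conn_unique h₃ C C' hC hC'
  have haux : ∀ k, connAux G C x (C.map x y) k = connAux G C' x (C'.map x y) k := by
    intro k
    induction k with
    | zero =>
      show (x, C.map x y) = (x, C'.map x y)
      rw [hu x y hxy]
    | succ n ih =>
      show ((connAux G C x (C.map x y) n).2,
          C.map (connAux G C x (C.map x y) n).2 (G.bar (connAux G C x (C.map x y) n).1))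
        = ((connAux G C' x (C'.map x y) n).2,
          C'.map (connAux G C' x (C'.map x y) n).2 (G.bar (connAux G C' x (C'.map x y) n).1))
      rw [← ih]
      have hs : G.src (G.bar (connAux G C x (C.map x y) n).1)
          = G.src (connAux G C x (C.map x y) n).2 := by
        rw [src_bar]; exact (connAux_src G C x y hxy n).symm
      rw [hu _ _ hs]
  funext k
  show (connAux G C x (C.map x y) k).1 = (connAux G C' x (C'.map x y) k).1
  rw [haux k]

/-- Every connection path is periodic, hence has a minimal period. -/
lemma exists_minPeriod (C : Connection G) (x y : G.E) (hxy : G.src y = G.src x) :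
    ∃ N, MinPeriod (connPath G C x y) N := by
  classical
  haveI := G.fintypeE
  set h := connPath G C x y with hh
  have hsrc : ∀ k, G.src (h (k + 1)) = G.tgt (h k) := connPath_src G C x y hxy
  have hstep : ∀ i j, h (i+1) = h (j+1) → h (i+2) = h (j+2) → h i = h j := by
    intro i j h1 h2
    have e1 : C.map (G.bar (h (i+1))) (h (i+2)) = G.bar (h i) := by
      rw [hh, connPath_rec]
      exact C.map_bar _ _ (by rw [src_bar]; exact (hsrc i).symm)
    have e2 : C.map (G.bar (h (j+1))) (h (j+2)) = G.bar (h j) := by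
      rw [hh, connPath_rec]
      exact C.map_bar _ _ (by rw [src_bar]; exact (hsrc j).symm)
    rw [h1, h2, e2] at e1
    exact (bar_inj G e1).symm
  obtain ⟨i, j, hij, hs1, hs2⟩ : ∃ i j, i < j ∧ h i = h j ∧ h (i+1) = h (j+1) := by
    obtain ⟨i, j, hne, heq⟩ :=
      Finite.exists_ne_map_eq_of_infinite (fun k => (h k, h (k+1)))
    have heq1 : h i = h j := congrArg Prod.fst heq
    have heq2 : h (i+1) = h (j+1) := congrArg Prod.snd heq
    rcases lt_or_gt_of_ne hne with hlt | hgt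
    · exact ⟨i, j, hlt, heq1, heq2⟩
    · exact ⟨j, i, hgt, heq1.symm, heq2.symm⟩
  set d := j - i with hd
  have hdpos : 0 < d := by omega
  have hji : j = i + d := by omega
  rw [hji] at hs1 hs2
  have hshift : ∀ i', h i' = h (i' + d) → h (i'+1) = h (i' + d + 1) → h 0 = h d ∧ h 1 = h (d+1) := by
    intro i'
    induction i' with
    | zero => intro a b; exact ⟨by simpa using a, by simpa using b⟩
    | succ n ih =>
      intro a b
      have a' : h (n+1) = h (n + d + 1) := by rw [a]; congr 1; omega
      have b' : h (n+2) = h (n + d + 2) := by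
        rw [b]; congr 1; omega
      exact ih (hstep n (n + d) a' b') a'
  obtain ⟨h0d, h1d⟩ := hshift i hs1 hs2
  have key : ∀ k, h k = h (k + d) ∧ h (k+1) = h (k + d + 1) := by
    intro k
    induction k with
    | zero => exact ⟨by simpa using h0d, by simpa using h1d⟩
    | succ n ih =>
      refine ⟨by rw [ih.2]; congr 1; omega, ?_⟩
      have r1 : h (n+2) = C.map (h (n+1)) (G.bar (h n)) := by rw [hh, connPath_rec]
      have r2 : h (n + d + 2) = C.map (h (n + d + 1)) (G.bar (h (n + d))) := by
        rw [hh, connPath_rec]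
      have : h (n + 2) = h (n + d + 2) := by rw [r1, r2, ih.1, ih.2]
      rw [show n + 1 + 1 = n + 2 from rfl, show n + 1 + d + 1 = n + d + 2 by omega]
      exact this
  have hper : IsPeriod h d := ⟨hdpos, fun k => ((key k).1).symm⟩
  have hex : ∃ N, IsPeriod h N := ⟨d, hper⟩
  haveI : DecidablePred (IsPeriod h) := fun _ => Classical.propDecidable _
  exact ⟨Nat.find hex, Nat.find_spec hex, fun N' hN' => Nat.find_min' hex hN'⟩

/-- MinPeriods are unique. -/
lemma minPeriod_unique {α : Type*} {g : ℕ → α} {N N' : ℕ}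
    (h : MinPeriod g N) (h' : MinPeriod g N') : N = N' :=
  le_antisymm (h.2 N' h'.1) (h'.2 N h.1)

variable (Q : QuatStructure G A)

/-- If the first two edges of a connection path (for a pair-preserving connection) are
quaternionically paired, the whole path is quaternionic. -/
lemma quat_propagate (C : Connection G)
    (hcp : ∀ e f, G.src f = G.src e → C.map e (Q.qpair f) = Q.qpair (C.map e f))
    (x y : G.E) (hxy : G.src y = G.src x)
    (hbase : Q.qpair (connPath G C x y 1) = G.bar (connPath G C x y 0)) :
    IsQuatPath G Q (connPath G C x y) := by
  intro k
  induction k with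
  | zero => exact hbase
  | succ n ih =>
    set h := connPath G C x y with hh
    have hrec : h (n + 2) = C.map (h (n+1)) (G.bar (h n)) := by rw [hh, connPath_rec]
    have hbar : G.bar (h n) = Q.qpair (h (n+1)) := ih.symm
    have : h (n + 2) = Q.qpair (G.bar (h (n+1))) := by
      rw [hrec, hbar, hcp _ _ rfl, C.map_self]
    rw [this, Q.qpair_invol]

end AuxConn

/-- If every quaternionic 2-face is a biangle or a noncomplex triangle, and every complex
2-face is a triangle, a quadrangle with the standard signed structure, or a hexagon with
the standard signed structure, then there are no complex hexagons. -/
theorem no_complex_hexagon (G : Graph) {m : ℕ} (A : Axial G m) (Q : QuatStructure G A)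
    (h₃ : A.IsGKM 3)
    (hfaces : ∀ C : Connection G, CompatibleConn G A.label C →
      ∀ e f, G.src f = G.src e → f ≠ e → ∀ N, MinPeriod (connPath G C e f) N →
        (IsQuatPath G Q (connPath G C e f) →
          N = 2 ∨ IsNoncomplexTriangle G Q (connPath G C e f)) ∧
        (¬ IsQuatPath G Q (connPath G C e f) →
          N = 3 ∨
          (N = 4 ∧ ∃ γ, SignedStructureOn G A Q (connPath G C e f) 4 γ ∧
            ∀ k, γ (k + 2) = -(γ k)) ∨
          (N = 6 ∧ ∃ γ, SignedStructureOn G A Q (connPath G C e f) 6 γ ∧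
            ∀ k, γ (k + 2) = γ (k + 1) - γ k))) :
    ∀ C : Connection G, CompatibleConn G A.label C →
      ∀ e f, G.src f = G.src e → f ≠ e →
        ¬ (¬ IsQuatPath G Q (connPath G C e f) ∧
            MinPeriod (connPath G C e f) 6) := by
  classical
  intro C hC e f hsrcef hnef
  rintro ⟨hQ, hP⟩
  obtain ⟨C₂, hcc, hcp, hcm⟩ := Q.cond₂
  have hpatheq : connPath G C e f = connPath G C₂ e f :=
    connPath_unique h₃ C C₂ hC hcc e f hsrcef
  rw [hpatheq] at hQ hP
  set g : ℕ → G.E := connPath G C₂ e f with hg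
  have hgsrc : ∀ k, G.src (g (k+1)) = G.tgt (g k) := connPath_src G C₂ e f hsrcef
  have hgrec : ∀ k, g (k+2) = C₂.map (g (k+1)) (G.bar (g k)) :=
    fun k => connPath_rec G C₂ e f k
  have hg6 : ∀ k, g (k + 6) = g k := hP.1.2
  have hg6t : ∀ t k, g (k + 6 * t) = g k := by
    intro t
    induction t with
    | zero => intro k; simp
    | succ n ih =>
      intro k
      rw [show k + 6 * (n+1) = (k + 6 * n) + 6 by ring, hg6, ih]
  obtain ⟨γ, hss, hγrec⟩ : ∃ γ, SignedStructureOn G A Q g 6 γ ∧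
      ∀ k, γ (k+2) = γ (k+1) - γ k := by
    have h6 := (hfaces C₂ hcc e f hsrcef hnef 6 hP).2 hQ
    rcases h6 with h | ⟨h, -⟩ | ⟨-, hγ⟩
    · omega
    · omega
    · exact hγ
  obtain ⟨hγ6, hγpm, -, hQC⟩ := hss
  -- nowhere quaternionically paired
  have hprop : ∀ k, Q.qpair (g (k+1)) = G.bar (g k) →
      ∀ i, Q.qpair (g (k+i+1)) = G.bar (g (k+i)) := by
    intro k hk i
    induction i with
    | zero => simpa using hk
    | succ n ih =>
      have hrec' : g (k+n+2) = C₂.map (g (k+n+1)) (G.bar (g (k+n))) := hgrec (k+n)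
      have hx : g (k+n+2) = Q.qpair (G.bar (g (k+n+1))) := by
        rw [hrec', ← ih, hcp _ _ rfl, C₂.map_self]
      show Q.qpair (g (k + (n+1) + 1)) = G.bar (g (k + (n+1)))
      rw [show k + (n+1) + 1 = k + n + 2 by omega, show k + (n+1) = k + n + 1 by omega,
        hx, Q.qpair_invol]
  have hnp : ∀ k, Q.qpair (g (k+1)) ≠ G.bar (g k) := by
    intro k hk
    rw [IsQuatPath] at hQ
    push_neg at hQ
    obtain ⟨k₀, hk₀⟩ := hQ
    apply hk₀
    have h1 := hprop k hk (k₀ + 5*k)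
    rw [show k + (k₀ + 5*k) = k₀ + 6*k by ring] at h1
    rwa [show k₀ + 6*k + 1 = (k₀+1) + 6*k by omega, hg6t, hg6t] at h1
  -- no biangle degeneracies along the hexagon
  have hbarne : ∀ k, G.bar (g k) ≠ g (k+1) := by
    intro k hk
    have hfw : ∀ i, G.bar (g (k+i)) = g (k+i+1) := by
      intro i
      induction i with
      | zero => simpa using hk
      | succ n ih =>
        have : g (k+n+2) = G.bar (g (k+n+1)) := by
          rw [hgrec (k+n), ih, C₂.map_self]
        show G.bar (g (k+n+1)) = g (k+n+2)
        exact this.symm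
    have hA : ∀ i, g (k+i+2) = g (k+i) := by
      intro i
      have h1 := hfw i
      have h2 := hfw (i+1)
      have hb : G.bar (g (k+i+1)) = g (k+i) := by rw [← h1, G.bar_invol]
      rw [show k+i+2 = k+(i+1)+1 by omega, ← h2, show k+(i+1) = k+i+1 by omega, hb]
    have hper2 : IsPeriod g 2 := by
      refine ⟨by omega, fun j => ?_⟩
      have e1 : g (j + 2) = g (j + 2 + 6*k) := (hg6t k (j+2)).symm
      rw [e1, show j + 2 + 6*k = k + (j + 5*k) + 2 by ring, hA (j + 5*k),
        show k + (j + 5*k) = j + 6*k by ring, hg6t]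
    have := hP.2 2 hper2
    omega
  -- the chosen lifts and families at the vertices of the hexagon
  have hQC' : ∀ k, ∃ ℓ' L, (QFam G A.label Q.lam Q.qpair (G.tgt (g k)) L ℓ')
      ∧ L (G.bar (g k)) = -(γ k) ∧ L (g (k+1)) = γ (k+1) := by
    intro k
    obtain ⟨ℓ', L, hfm, hlist⟩ := hQC k
    exact ⟨ℓ', L, hfm, hlist (G.bar (g k), -(γ k)) (by simp), hlist (g (k+1), γ (k+1)) (by simp)⟩
  choose ℓ Lf hfam hLbar hLg using hQC'
  -- basic source facts and distinctness
  have hsrcq : ∀ k, G.src (Q.qpair (g (k+1))) = G.tgt (g k) := by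
    intro k; rw [Q.qpair_src, hgsrc]
  have hsrcp : ∀ k, G.src (Q.qpair (G.bar (g k))) = G.tgt (g k) := by
    intro k; rw [Q.qpair_src]; rfl
  have hpng1 : ∀ k, Q.qpair (G.bar (g k)) ≠ g (k+1) := by
    intro k hk
    apply hnp k
    rw [← hk, Q.qpair_invol]
  -- family values
  have hLfp : ∀ k, Lf k (Q.qpair (G.bar (g k))) = ℓ k + γ k := by
    intro k
    have h1 := ((hfam k).2 (G.bar (g k)) rfl).2
    rw [hLbar k] at h1
    rw [← h1]; module
  have hLfq : ∀ k, Lf k (Q.qpair (g (k+1))) = ℓ k - γ (k+1) := by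
    intro k
    have h1 := ((hfam k).2 (g (k+1)) (hgsrc k)).2
    rw [hLg k] at h1
    rw [← h1]; module
  -- label lifts
  have hlabp : ∀ k, PM (ℓ k + γ k) (A.label (Q.qpair (G.bar (g k)))) := by
    intro k
    have h1 := ((hfam k).2 (Q.qpair (G.bar (g k))) (hsrcp k)).1
    rwa [hLfp k] at h1
  have hlabq : ∀ k, PM (ℓ k - γ (k+1)) (A.label (Q.qpair (g (k+1)))) := by
    intro k
    have h1 := ((hfam k).2 (Q.qpair (g (k+1))) (hsrcq k)).1
    rwa [hLfq k] at h1
  have hlabbar : ∀ k, PM (-(γ k)) (A.label (G.bar (g k))) := by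
    intro k
    have h1 := ((hfam k).2 (G.bar (g k)) rfl).1
    rwa [hLbar k] at h1
  have hlamw : ∀ k, PM (ℓ k) (Q.lam (G.tgt (g k))) := fun k => (hfam k).1
  -- the basic independence triple at each vertex of the hexagon
  have hI3 : ∀ k, I3 (γ k) (γ (k+1)) (ℓ k) := by
    intro k
    have hI := gkm3_i3 h₃ (G.bar (g k)) (g (k+1)) (Q.qpair (G.bar (g k)))
      (hbarne k) (Ne.symm (Q.qpair_ne (G.bar (g k)))) (Ne.symm (hpng1 k))
      (hgsrc k) (Q.qpair_src (G.bar (g k)))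
    obtain ⟨s₁, hs₁, e₁⟩ := pm_ex (hlabbar k)
    obtain ⟨s₂, hs₂, e₂⟩ := pm_ex (hγpm (k+1))
    obtain ⟨s₃, hs₃, e₃⟩ := pm_ex (hlabp k)
    have h1 : γ k = (-s₁) • A.label (G.bar (g k)) := by
      rw [neg_smul, ← e₁, neg_neg]
    have h2 : I3 (γ k) (γ (k+1)) (ℓ k + γ k) :=
      hI.congr (by rcases hs₁ with rfl | rfl <;> norm_num) hs₂ hs₃ h1 e₂ e₃
    exact h2.adjust 1 0 (by module)
  -- the weight-transport recurrence
  have hcex : ∀ k, ∃ cc : ℤ, ℓ (k+1) = ℓ k + cc • γ (k+1) := by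
    intro k
    have hsrc1 : G.src (g (k+1)) = G.tgt (g k) := hgsrc k
    have hq1 : QCompat G A.label Q.lam Q.qpair (G.src (g (k+1))) [(g (k+1), γ (k+1))] (ℓ k) := by
      rw [hsrc1]
      refine ⟨Lf k, hfam k, ?_⟩
      intro pp hpp
      simp only [List.mem_singleton] at hpp
      subst hpp
      exact hLg k
    obtain ⟨lw, ⟨c0, hlw⟩, hQw, hfcl⟩ := hcm (g (k+1)) (γ (k+1)) (ℓ k) hq1
    obtain ⟨s₂, hs₂, e₂⟩ := pm_ex (hγpm (k+1))
    have hq2 : QCompat G A.label Q.lam Q.qpair (G.src (g (k+1)))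
        [(g (k+1), γ (k+1)), (G.bar (g k), -(γ k))] (ℓ k) := by
      rw [hsrc1]
      refine ⟨Lf k, hfam k, ?_⟩
      intro pp hpp
      simp only [List.mem_cons, List.mem_singleton, List.not_mem_nil, or_false] at hpp
      rcases hpp with rfl | rfl
      · exact hLg k
      · exact hLbar k
    have hy : PM (γ (k+2)) (A.label (C₂.map (g (k+1)) (G.bar (g k)))) := by
      rw [← hgrec k]; exact hγpm (k+2)
    have hyc : ∃ cc : ℤ, γ (k+2) = -(γ k) + cc • A.label (g (k+1)) := by
      refine ⟨s₂, ?_⟩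
      rw [hγrec k, sflip hs₂ e₂, smul_smul]
      rcases hs₂ with rfl | rfl <;> module
    have hq3 := hfcl (G.bar (g k)) (by rw [hsrc1]; rfl) (-(γ k)) hq2 (γ (k+2)) hy hyc
    rw [← hgrec k] at hq3
    obtain ⟨M, hMfam, hMlist⟩ := hq3
    have hM2 : M (g (k+2)) = γ (k+2) := hMlist (g (k+2), γ (k+2)) (by simp)
    have hMq : M (Q.qpair (g (k+2))) = lw - γ (k+2) := by
      have h1 := (hMfam.2 (g (k+2)) (hgsrc (k+1))).2
      rw [hM2] at h1
      rw [← h1]; module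
    have hMqpm : PM (lw - γ (k+2)) (A.label (Q.qpair (g (k+2)))) := by
      have h1 := (hMfam.2 (Q.qpair (g (k+2))) (hsrcq (k+1))).1
      rwa [hMq] at h1
    obtain ⟨sl, hsl, el⟩ := pm_pm hMfam.1 (hlamw (k+1))
    obtain ⟨sq, hsq, eq1⟩ := pm_pm hMqpm (hlabq (k+1))
    have hco : (0:ℤ) = 0 ∧ (-1 : ℤ) = -sq ∧ sl = sq := by
      apply (hI3 (k+1)).coords
      calc (0:ℤ) • γ (k+1) + (-1:ℤ) • γ (k+2) + sl • ℓ (k+1)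
          = lw - γ (k+2) := by rw [el]; module
        _ = sq • (ℓ (k+1) - γ (k+2)) := eq1
        _ = (0:ℤ) • γ (k+1) + (-sq) • γ (k+2) + sq • ℓ (k+1) := by module
    have hsl1 : sl = 1 := by omega
    refine ⟨c0 * s₂, ?_⟩
    have hlww : ℓ (k+1) = lw := by rw [el, hsl1, one_smul]
    rw [hlww, hlw, sflip hs₂ e₂, smul_smul]
  choose c hc using hcex
  -- face dichotomy: the quaternionic face through g (k+1) is a biangle or a
  -- noncomplex triangle
  have hK : ∀ k, (c k = -1 ∧ PM (γ (k+1)) (Q.lam (G.tgt (Q.qpair (g (k+1))))))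
      ∨ (c k = -2 ∧ G.tgt (Q.qpair (g (k+1))) = G.tgt (g (k+1))) := by
    intro k
    set B : ℕ → G.E := connPath G C₂ (g (k+1)) (Q.qpair (g (k+1))) with hB
    have hBsrc : G.src (Q.qpair (g (k+1))) = G.src (g (k+1)) := Q.qpair_src _
    have hB0 : B 0 = g (k+1) := rfl
    have hB1 : B 1 = Q.qpair (G.bar (g (k+1))) := by
      rw [hB, connPath_one, hcp _ _ rfl, C₂.map_self]
    have hquatB : IsQuatPath G Q B := by
      apply quat_propagate Q C₂ hcp _ _ hBsrc
      rw [← hB, hB1, Q.qpair_invol, hB0]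
    obtain ⟨N, hN⟩ := exists_minPeriod C₂ (g (k+1)) (Q.qpair (g (k+1))) hBsrc
    have hD := (hfaces C₂ hcc (g (k+1)) (Q.qpair (g (k+1))) hBsrc
      (Q.qpair_ne (g (k+1))) N (by rw [← hB] at hN; exact hN)).1 (by rw [← hB]; exact hquatB)
    rcases hD with h2 | hT
    · -- biangle
      right
      subst h2
      have hB2 : B 2 = B 0 := hN.1.2 0
      have hq1 := hquatB 1
      rw [hB2, hB0] at hq1
      -- hq1 : Q.qpair (g (k+1)) = G.bar (B 1)
      have hB1' : B 1 = G.bar (Q.qpair (g (k+1))) := by rw [hq1, G.bar_invol]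
      have hbb : Q.qpair (G.bar (g (k+1))) = G.bar (Q.qpair (g (k+1))) := by
        rw [← hB1, hB1']
      -- label comparison
      have hpm1 : PM (ℓ (k+1) + γ (k+1)) (A.label (G.bar (Q.qpair (g (k+1))))) := by
        have := hlabp (k+1)
        rwa [hbb] at this
      have hpm2 : PM (ℓ (k+1) + γ (k+1)) (A.label (Q.qpair (g (k+1)))) :=
        pm_trans hpm1 (A.label_bar _)
      obtain ⟨s, hs, es⟩ := pm_pm hpm2 (hlabq k)
      have hco : (0:ℤ) = 0 ∧ c k + 1 = -s ∧ (1:ℤ) = s := by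
        apply (hI3 k).coords
        calc (0:ℤ) • γ k + (c k + 1) • γ (k+1) + (1:ℤ) • ℓ k
            = ℓ (k+1) + γ (k+1) := by rw [hc k]; module
          _ = s • (ℓ k - γ (k+1)) := es
          _ = (0:ℤ) • γ k + (-s) • γ (k+1) + s • ℓ k := by module
      constructor
      · omega
      · -- target of q k is w (k+1)
        have h4 : Q.qpair (g (k+1)) = G.bar (Q.qpair (G.bar (g (k+1)))) := by
          rw [hbb, G.bar_invol]
        rw [h4, tgt_bar, Q.qpair_src]
        rfl
    · -- noncomplex triangle
      left
      rw [← hB] at hT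
      obtain ⟨hmin3, hquat3, a', l', hA0, hA1, hA2, hL0, hL1, hL2⟩ := hT
      have hpmB1 : PM (ℓ (k+1) + γ (k+1)) l' := by
        have h1 := hlabp (k+1)
        rw [← hB1] at h1
        exact pm_trans h1 hA1
      have hpmL0 : PM (ℓ k) l' := by
        have h1 : G.src (B 0) = G.tgt (g k) := by rw [hB0]; exact hgsrc k
        rw [h1] at hL0
        exact pm_trans (hlamw k) hL0
      obtain ⟨s, hs, es⟩ := pm_pm hpmB1 hpmL0
      have hco : (0:ℤ) = 0 ∧ c k + 1 = 0 ∧ (1:ℤ) = s := by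
        apply (hI3 k).coords
        calc (0:ℤ) • γ k + (c k + 1) • γ (k+1) + (1:ℤ) • ℓ k
            = ℓ (k+1) + γ (k+1) := by rw [hc k]; module
          _ = s • ℓ k := es
          _ = (0:ℤ) • γ k + (0:ℤ) • γ (k+1) + s • ℓ k := by module
      refine ⟨by omega, ?_⟩
      -- the third vertex and its quaternionic weight
      have hB3 : B 3 = B 0 := hmin3.1.2 0
      have hq2 := hquat3 2
      rw [hB3, hB0] at hq2
      have hB2' : B 2 = G.bar (Q.qpair (g (k+1))) := by rw [hq2, G.bar_invol]
      have hsrcB2 : G.src (B 2) = G.tgt (Q.qpair (g (k+1))) := by rw [hB2', src_bar]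
      rw [hsrcB2] at hL2
      have h1 : PM (γ (k+1)) a' := pm_trans (hγpm (k+1)) (by rw [hB0] at hA0; exact hA0)
      exact pm_trans h1 (pm_swap hL2)
  have hcval : ∀ k, c k = -1 ∨ c k = -2 := by
    intro k
    rcases hK k with ⟨h, -⟩ | ⟨h, -⟩
    · exact Or.inl h
    · exact Or.inr h
  -- normalization of a signed structure on the face through g (k+1) and p k
  have hnorm : ∀ k (δ : ℕ → (Fin m → ℤ)),
      PM (δ 0) (A.label (g (k+1))) →
      (∃ l0, QCompat G A.label Q.lam Q.qpair (G.tgt (g (k+1)))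
        [(G.bar (g (k+1)), -(δ 0)), (Q.qpair (g (k+2)), δ 1)] l0) →
      ∃ η e4 : ℤ, (η = 1 ∨ η = -1) ∧ (e4 = 1 ∨ e4 = -1) ∧
        δ 0 = η • γ (k+1) ∧ δ 1 = η • ℓ (k+1) - e4 • γ (k+2) := by
    intro k δ hpm0 ⟨l0, M, hMfam, hMlist⟩
    have hMbar : M (G.bar (g (k+1))) = -(δ 0) :=
      hMlist (G.bar (g (k+1)), -(δ 0)) (by simp)
    have hMq2 : M (Q.qpair (g (k+2))) = δ 1 :=
      hMlist (Q.qpair (g (k+2)), δ 1) (by simp)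
    obtain ⟨sc, hsc, ec⟩ := pm_pm hpm0 (hγpm (k+1))
    obtain ⟨sb, hsb, eb⟩ := pm_pm hMfam.1 (hlamw (k+1))
    have hMP1 : M (Q.qpair (G.bar (g (k+1)))) = l0 + δ 0 := by
      have h1 := (hMfam.2 (G.bar (g (k+1))) rfl).2
      rw [hMbar] at h1
      rw [← h1]; module
    have hpmP1 : PM (l0 + δ 0) (A.label (Q.qpair (G.bar (g (k+1))))) := by
      have h1 := (hMfam.2 (Q.qpair (G.bar (g (k+1)))) (hsrcp (k+1))).1
      rwa [hMP1] at h1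
    obtain ⟨sa, hsa, ea⟩ := pm_pm hpmP1 (hlabp (k+1))
    have hco : sc = sa ∧ (0:ℤ) = 0 ∧ sb = sa := by
      apply (hI3 (k+1)).coords
      calc sc • γ (k+1) + (0:ℤ) • γ (k+2) + sb • ℓ (k+1)
          = l0 + δ 0 := by rw [eb, ec]; module
        _ = sa • (ℓ (k+1) + γ (k+1)) := ea
        _ = sa • γ (k+1) + (0:ℤ) • γ (k+2) + sa • ℓ (k+1) := by module
    have hps := (hMfam.2 (g (k+2)) (hgsrc (k+1))).2
    rw [hMq2] at hps
    obtain ⟨sd, hsd, ed⟩ := pm_pm ((hMfam.2 (g (k+2)) (hgsrc (k+1))).1) (hγpm (k+2))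
    refine ⟨sa, sd, hsa, hsd, ?_, ?_⟩
    · rw [ec, hco.1]
    · have h2 : δ 1 = l0 - M (g (k+2)) := by rw [← hps]; module
      rw [h2, ed, eb, hco.2.2]
  -- a family containing an edge whose partner has label in the span of the
  -- hexagon labels is impossible
  have hkill : ∀ k (b : G.E) (V : Fin m → ℤ) (P Qq η : ℤ), (η = 1 ∨ η = -1) →
      G.src b = G.tgt (g k) →
      V = η • ℓ k + P • γ k + Qq • γ (k+1) →
      (¬ ∃ s : ℤ, (s = 1 ∨ s = -1) ∧ V = s • (ℓ k + γ k)) →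
      (¬ ∃ s : ℤ, (s = 1 ∨ s = -1) ∧ V = s • (ℓ k - γ (k+1))) →
      (∃ ls, QCompat G A.label Q.lam Q.qpair (G.tgt (g k))
        [(b, V), (g (k+1), η • γ (k+1))] ls) →
      False := by
    intro k b V P Qq η hη hb hV hnot1 hnot2 ⟨ls, M, hMfam, hMlist⟩
    have hMb : M b = V := hMlist (b, V) (by simp)
    have hMg : M (g (k+1)) = η • γ (k+1) := hMlist (g (k+1), η • γ (k+1)) (by simp)
    have hpmV : PM V (A.label b) := by
      have h1 := (hMfam.2 b hb).1
      rwa [hMb] at h1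
    -- the weight is η • ℓ k
    have hMqq : M (Q.qpair (g (k+1))) = ls - η • γ (k+1) := by
      have h1 := (hMfam.2 (g (k+1)) (hgsrc k)).2
      rw [hMg] at h1
      rw [← h1]; module
    have hpmqq : PM (ls - η • γ (k+1)) (A.label (Q.qpair (g (k+1)))) := by
      have h1 := (hMfam.2 (Q.qpair (g (k+1))) (hsrcq k)).1
      rwa [hMqq] at h1
    obtain ⟨se, hse, ee⟩ := pm_pm hpmqq (hlabq k)
    obtain ⟨sf, hsf, ef⟩ := pm_pm hMfam.1 (hlamw k)
    have hco : (0:ℤ) = 0 ∧ -η = -se ∧ sf = se := by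
      apply (hI3 k).coords
      calc (0:ℤ) • γ k + (-η) • γ (k+1) + sf • ℓ k
          = ls - η • γ (k+1) := by rw [ef]; module
        _ = se • (ℓ k - γ (k+1)) := ee
        _ = (0:ℤ) • γ k + (-se) • γ (k+1) + se • ℓ k := by module
    have hls : ls = η • ℓ k := by
      have hseη : se = η := by omega
      rw [ef, hco.2.2, hseη]
    -- b is not one of the paired face edges
    have hbp : b ≠ Q.qpair (G.bar (g k)) := by
      intro hbeq
      rw [hbeq] at hpmV
      obtain ⟨s, hs, es⟩ := pm_pm hpmV (hlabp k)
      exact hnot1 ⟨s, hs, es⟩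
    have hbq : b ≠ Q.qpair (g (k+1)) := by
      intro hbeq
      rw [hbeq] at hpmV
      obtain ⟨s, hs, es⟩ := pm_pm hpmV (hlabq k)
      exact hnot2 ⟨s, hs, es⟩
    -- the partner of b
    have hMr : M (Q.qpair b) = (-P) • γ k + (-Qq) • γ (k+1) := by
      have h1 := (hMfam.2 b hb).2
      rw [hMb] at h1
      have h2 : M (Q.qpair b) = ls - V := by rw [← h1]; module
      rw [h2, hls, hV]
      rcases hη with rfl | rfl <;> module
    have hpmr : PM ((-P) • γ k + (-Qq) • γ (k+1)) (A.label (Q.qpair b)) := by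
      have h1 := (hMfam.2 (Q.qpair b) (by rw [Q.qpair_src]; exact hb)).1
      rwa [hMr] at h1
    have hrne1 : Q.qpair b ≠ G.bar (g k) := by
      intro hr
      apply hbp
      rw [← Q.qpair_invol b, hr]
    have hrne2 : Q.qpair b ≠ g (k+1) := by
      intro hr
      apply hbq
      rw [← Q.qpair_invol b, hr]
    have hI := gkm3_i3 h₃ (G.bar (g k)) (g (k+1)) (Q.qpair b)
      (hbarne k) (Ne.symm hrne1) (Ne.symm hrne2) (hgsrc k)
      (by rw [Q.qpair_src]; exact hb)
    obtain ⟨t₁, ht₁, et₁⟩ := pm_ex (hlabbar k)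
    obtain ⟨t₂, ht₂, et₂⟩ := pm_ex (hγpm (k+1))
    obtain ⟨t₃, ht₃, et₃⟩ := pm_ex hpmr
    -- γ k = (-t₁) • label (bar (g k)), γ (k+1) = t₂ • label (g (k+1))
    have hγk : γ k = (-t₁) • A.label (G.bar (g k)) := by rw [neg_smul, ← et₁, neg_neg]
    have hγk1 : γ (k+1) = t₂ • A.label (g (k+1)) := et₂
    have hlabr : A.label (Q.qpair b)
        = (t₃ * P * t₁) • A.label (G.bar (g k))
          + (-(t₃ * Qq * t₂)) • A.label (g (k+1)) := by
      rw [sflip ht₃ et₃, hγk, hγk1]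
      module
    have h0 : (t₃ * P * t₁) • A.label (G.bar (g k)) + (-(t₃ * Qq * t₂)) • A.label (g (k+1))
        + (-1 : ℤ) • A.label (Q.qpair b) = 0 := by
      rw [hlabr]; module
    have := (hI _ _ _ h0).2.2
    omega
  -- the complex 2-face through g (k+1) and p k is a triangle; extract its third edge
  have hLD : ∀ k, ∃ τ : ℤ, (τ = 1 ∨ τ = -1) ∧ ∃ u : G.E,
      G.src u = G.tgt (g k) ∧ G.tgt u = G.tgt (Q.qpair (g (k+2))) ∧
      PM (γ (k+1) - τ • (ℓ (k+1) - γ (k+2))) (A.label u) := by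
    intro k
    have hDsrc : G.src (Q.qpair (G.bar (g k))) = G.src (g (k+1)) := by
      rw [Q.qpair_src, hgsrc]
      rfl
    have hD0 : connPath G C₂ (g (k+1)) (Q.qpair (G.bar (g k))) 0 = g (k+1) := rfl
    have hD1 : connPath G C₂ (g (k+1)) (Q.qpair (G.bar (g k))) 1 = Q.qpair (g (k+2)) := by
      rw [connPath_one, hcp _ _ (by rw [src_bar]; exact (hgsrc k).symm), ← hgrec k]
    have hnq : ¬ IsQuatPath G Q (connPath G C₂ (g (k+1)) (Q.qpair (G.bar (g k)))) := by
      intro hq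
      have h0 := hq 0
      rw [hD1, hD0, Q.qpair_invol] at h0
      exact hbarne (k+1) h0.symm
    obtain ⟨N, hN⟩ := exists_minPeriod C₂ (g (k+1)) (Q.qpair (G.bar (g k))) hDsrc
    have hDfc := (hfaces C₂ hcc (g (k+1)) (Q.qpair (G.bar (g k))) hDsrc (hpng1 k) N hN).2 hnq
    rcases hDfc with h3 | ⟨h4, δ, hssD, hflip⟩ | ⟨h6, δ, hssD, hhex⟩
    · -- triangle : extract the data
      subst h3
      have hD3 : connPath G C₂ (g (k+1)) (Q.qpair (G.bar (g k))) 3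
          = connPath G C₂ (g (k+1)) (Q.qpair (G.bar (g k))) 0 := hN.1.2 0
      have hsrcD2 : G.src (connPath G C₂ (g (k+1)) (Q.qpair (G.bar (g k))) 2)
          = G.tgt (Q.qpair (g (k+2))) := by
        have h1 := connPath_src G C₂ _ _ hDsrc 1
        rwa [hD1] at h1
      have htgtD2 : G.tgt (connPath G C₂ (g (k+1)) (Q.qpair (G.bar (g k))) 2)
          = G.tgt (g k) := by
        have h1 := connPath_src G C₂ _ _ hDsrc 2
        rw [hD3, hD0] at h1
        rw [← h1]
        exact hgsrc k
      have hrec2 : connPath G C₂ (g (k+1)) (Q.qpair (G.bar (g k))) 2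
          = C₂.map (connPath G C₂ (g (k+1)) (Q.qpair (G.bar (g k))) 1)
            (G.bar (connPath G C₂ (g (k+1)) (Q.qpair (G.bar (g k))) 0)) :=
        connPath_rec G C₂ _ _ 0
      have hrec3 : connPath G C₂ (g (k+1)) (Q.qpair (G.bar (g k))) 3
          = C₂.map (connPath G C₂ (g (k+1)) (Q.qpair (G.bar (g k))) 2)
            (G.bar (connPath G C₂ (g (k+1)) (Q.qpair (G.bar (g k))) 1)) :=
        connPath_rec G C₂ _ _ 1
      obtain ⟨x₁, y₁, px₁, py₁, c₁, hc₁⟩ := hcc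
        (connPath G C₂ (g (k+1)) (Q.qpair (G.bar (g k))) 1)
        (G.bar (connPath G C₂ (g (k+1)) (Q.qpair (G.bar (g k))) 0))
        (by rw [src_bar]; exact (connPath_src G C₂ _ _ hDsrc 0).symm)
      rw [← hrec2] at py₁
      obtain ⟨x₂, y₂, px₂, py₂, c₂, hc₂⟩ := hcc
        (connPath G C₂ (g (k+1)) (Q.qpair (G.bar (g k))) 2)
        (G.bar (connPath G C₂ (g (k+1)) (Q.qpair (G.bar (g k))) 1))
        (by rw [src_bar]; exact (connPath_src G C₂ _ _ hDsrc 1).symm)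
      rw [← hrec3, hD3, hD0] at py₂
      have px₁' : PM x₁ (A.label (g (k+1))) := by
        rw [hD0] at px₁
        exact pm_trans px₁ (A.label_bar _)
      obtain ⟨s₁, hs₁, e₁⟩ := pm_pm px₁' (hγpm (k+1))
      have px₂' := pm_trans px₂ (A.label_bar _)
      rw [hD1] at px₂'
      obtain ⟨s₂, hs₂, e₂⟩ := pm_pm px₂' (hlabq (k+1))
      obtain ⟨s₄, hs₄, e₄⟩ := pm_pm py₂ (hγpm (k+1))
      obtain ⟨s₅, hs₅, e₅⟩ := pm_pm
        (pm_refl (A.label (connPath G C₂ (g (k+1)) (Q.qpair (G.bar (g k))) 2))) py₁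
      have hlD1 : PM (A.label (connPath G C₂ (g (k+1)) (Q.qpair (G.bar (g k))) 1))
          (ℓ (k+1) - γ (k+2)) := by
        rw [hD1]; exact pm_swap (hlabq (k+1))
      obtain ⟨s₃, hs₃, e₃⟩ := pm_ex hlD1
      have hco : s₄ = c₂ * s₅ * s₁ ∧ (0:ℤ) = -(s₂ + c₂ * s₅ * (c₁ * s₃)) ∧
          (0:ℤ) = s₂ + c₂ * s₅ * (c₁ * s₃) := by
        apply (hI3 (k+1)).coords
        calc s₄ • γ (k+1) + (0:ℤ) • γ (k+2) + (0:ℤ) • ℓ (k+1)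
            = y₂ := by rw [e₄]; module
          _ = x₂ + c₂ • A.label (connPath G C₂ (g (k+1)) (Q.qpair (G.bar (g k))) 2) := hc₂
          _ = x₂ + (c₂ * s₅) • y₁ := by rw [e₅, smul_smul]
          _ = x₂ + (c₂ * s₅) • (x₁ + c₁
              • A.label (connPath G C₂ (g (k+1)) (Q.qpair (G.bar (g k))) 1)) := by rw [hc₁]
          _ = (c₂ * s₅ * s₁) • γ (k+1) + (-(s₂ + c₂ * s₅ * (c₁ * s₃))) • γ (k+2)
              + (s₂ + c₂ * s₅ * (c₁ * s₃)) • ℓ (k+1) := by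
            rw [e₁, e₂, e₃]; module
      have hc₁pm : c₁ = 1 ∨ c₁ = -1 := by
        have hmul : c₁ * (c₂ * s₅ * s₃) = -s₂ := by linear_combination -hco.2.2
        exact int_pm_of_mul (by rcases hs₂ with rfl | rfl <;> simp) hmul
      refine ⟨-(s₁ * c₁ * s₃), ?_, G.bar (connPath G C₂ (g (k+1)) (Q.qpair (G.bar (g k))) 2),
        ?_, ?_, ?_⟩
      · rcases hs₁ with rfl | rfl <;> rcases hc₁pm with rfl | rfl <;>
          rcases hs₃ with rfl | rfl <;> norm_num
      · rw [src_bar, htgtD2]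
      · rw [tgt_bar, hsrcD2]
      · have hy₁ : y₁ = s₁ • (γ (k+1) - (-(s₁ * c₁ * s₃)) • (ℓ (k+1) - γ (k+2))) := by
          rw [hc₁, e₁, e₃]
          rcases hs₁ with rfl | rfl <;> module
        have h1 : PM (γ (k+1) - (-(s₁ * c₁ * s₃)) • (ℓ (k+1) - γ (k+2))) y₁ :=
          pm_of_ex s₁ hs₁ (sflip hs₁ hy₁)
        exact pm_trans (pm_trans h1 py₁) (pm_swap (A.label_bar _))
    · -- quadrangle : impossible
      exfalso
      subst h4
      obtain ⟨hper, hpmD, -, hqcD⟩ := hssD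
      obtain ⟨η, e4, hη, he4, hδ0, hδ1⟩ := hnorm k δ (by have h1 := hpmD 0; rwa [hD0] at h1)
        (by
          obtain ⟨l0, hl0⟩ := hqcD 0
          rw [hD0, hD1] at hl0
          exact ⟨l0, hl0⟩)
      obtain ⟨ls, hls⟩ := hqcD 3
      have hd3 : -(δ 3) = δ 1 := by rw [hflip 1, neg_neg]
      have hδ4 : δ 4 = η • γ (k+1) := by
        rw [hflip 2, hflip 0, neg_neg, hδ0]
      have hD4 : connPath G C₂ (g (k+1)) (Q.qpair (G.bar (g k))) 4
          = connPath G C₂ (g (k+1)) (Q.qpair (G.bar (g k))) 0 := hN.1.2 0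
      have htgtD3 : G.tgt (connPath G C₂ (g (k+1)) (Q.qpair (G.bar (g k))) 3)
          = G.tgt (g k) := by
        have h1 := connPath_src G C₂ _ _ hDsrc 3
        rw [hD4, hD0] at h1
        rw [← h1]
        exact hgsrc k
      rw [htgtD3, hd3, hD4, hD0, hδ4] at hls
      apply hkill k (G.bar (connPath G C₂ (g (k+1)) (Q.qpair (G.bar (g k))) 3)) (δ 1)
        e4 (η * c k - e4) η hη
      · rw [src_bar, htgtD3]
      · rw [hδ1, hc k, hγrec k]; module
      · rintro ⟨s, hs, es⟩
        have hco : e4 = s ∧ (η * c k - e4) = 0 ∧ η = s := by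
          apply (hI3 k).coords
          calc e4 • γ k + (η * c k - e4) • γ (k+1) + η • ℓ k
              = δ 1 := by rw [hδ1, hc k, hγrec k]; module
            _ = s • (ℓ k + γ k) := es
            _ = s • γ k + (0:ℤ) • γ (k+1) + s • ℓ k := by module
        have hck := hcval k
        rcases hη with rfl | rfl <;> omega
      · rintro ⟨s, hs, es⟩
        have hco : e4 = 0 ∧ (η * c k - e4) = -s ∧ η = s := by
          apply (hI3 k).coords
          calc e4 • γ k + (η * c k - e4) • γ (k+1) + η • ℓ k
              = δ 1 := by rw [hδ1, hc k, hγrec k]; module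
            _ = s • (ℓ k - γ (k+1)) := es
            _ = (0:ℤ) • γ k + (-s) • γ (k+1) + s • ℓ k := by module
        omega
      · exact ⟨ls, hls⟩
    · -- hexagon : impossible
      exfalso
      subst h6
      obtain ⟨hper, hpmD, -, hqcD⟩ := hssD
      obtain ⟨η, e4, hη, he4, hδ0, hδ1⟩ := hnorm k δ (by have h1 := hpmD 0; rwa [hD0] at h1)
        (by
          obtain ⟨l0, hl0⟩ := hqcD 0
          rw [hD0, hD1] at hl0
          exact ⟨l0, hl0⟩)
      obtain ⟨ls, hls⟩ := hqcD 5
      have hδ3 : δ 3 = -(δ 0) := by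
        have h1 := hhex 1
        rw [hhex 0] at h1
        rw [h1]; module
      have hδ4 : δ 4 = -(δ 1) := by
        have h1 := hhex 2
        rw [hδ3, hhex 0] at h1
        rw [h1]; module
      have hδ5 : δ 5 = δ 0 - δ 1 := by
        have h1 := hhex 3
        rw [hδ4, hδ3] at h1
        rw [h1]; module
      have hd5 : -(δ 5) = δ 1 - δ 0 := by rw [hδ5]; module
      have hδ6 : δ 6 = η • γ (k+1) := by
        have h1 := hhex 4
        rw [hδ5, hδ4] at h1
        rw [h1, hδ0]; module
      have hD6 : connPath G C₂ (g (k+1)) (Q.qpair (G.bar (g k))) 6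
          = connPath G C₂ (g (k+1)) (Q.qpair (G.bar (g k))) 0 := hN.1.2 0
      have htgtD5 : G.tgt (connPath G C₂ (g (k+1)) (Q.qpair (G.bar (g k))) 5)
          = G.tgt (g k) := by
        have h1 := connPath_src G C₂ _ _ hDsrc 5
        rw [hD6, hD0] at h1
        rw [← h1]
        exact hgsrc k
      rw [htgtD5, hd5, hD6, hD0, hδ6] at hls
      apply hkill k (G.bar (connPath G C₂ (g (k+1)) (Q.qpair (G.bar (g k))) 5)) (δ 1 - δ 0)
        e4 (η * c k - e4 - η) η hη
      · rw [src_bar, htgtD5]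
      · rw [hδ1, hδ0, hc k, hγrec k]; module
      · rintro ⟨s, hs, es⟩
        have hco : e4 = s ∧ (η * c k - e4 - η) = 0 ∧ η = s := by
          apply (hI3 k).coords
          calc e4 • γ k + (η * c k - e4 - η) • γ (k+1) + η • ℓ k
              = δ 1 - δ 0 := by rw [hδ1, hδ0, hc k, hγrec k]; module
            _ = s • (ℓ k + γ k) := es
            _ = s • γ k + (0:ℤ) • γ (k+1) + s • ℓ k := by module
        have hck := hcval k
        rcases hη with rfl | rfl <;> omega
      · rintro ⟨s, hs, es⟩
        have hco : e4 = 0 ∧ (η * c k - e4 - η) = -s ∧ η = s := by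
          apply (hI3 k).coords
          calc e4 • γ k + (η * c k - e4 - η) • γ (k+1) + η • ℓ k
              = δ 1 - δ 0 := by rw [hδ1, hδ0, hc k, hγrec k]; module
            _ = s • (ℓ k - γ (k+1)) := es
            _ = (0:ℤ) • γ k + (-s) • γ (k+1) + s • ℓ k := by module
        omega
      · exact ⟨ls, hls⟩
  -- an edge at a hexagon vertex whose label lies in the span of the hexagon labels
  -- is one of the two hexagon edges
  have hspan2 : ∀ k (r : G.E) (P Qq : ℤ), G.src r = G.tgt (g k) →
      PM (P • γ k + Qq • γ (k+1)) (A.label r) →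
      (Qq ≠ 0 ∨ (P ≠ 1 ∧ P ≠ -1)) → (P ≠ 0 ∨ (Qq ≠ 1 ∧ Qq ≠ -1)) → False := by
    intro k r P Qq hr hpm hco1 hco2
    have hne1 : r ≠ G.bar (g k) := by
      intro hre
      rw [hre] at hpm
      obtain ⟨s, hs, es⟩ := pm_pm hpm (hlabbar k)
      have hcs : P = -s ∧ Qq = 0 ∧ (0:ℤ) = 0 := by
        apply (hI3 k).coords
        calc P • γ k + Qq • γ (k+1) + (0:ℤ) • ℓ k = P • γ k + Qq • γ (k+1) := by module
          _ = s • (-(γ k)) := es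
          _ = (-s) • γ k + (0:ℤ) • γ (k+1) + (0:ℤ) • ℓ k := by module
      rcases hs with rfl | rfl <;> rcases hco1 with h | ⟨h1, h2⟩ <;> omega
    have hne2 : r ≠ g (k+1) := by
      intro hre
      rw [hre] at hpm
      obtain ⟨s, hs, es⟩ := pm_pm hpm (hγpm (k+1))
      have hcs : P = 0 ∧ Qq = s ∧ (0:ℤ) = 0 := by
        apply (hI3 k).coords
        calc P • γ k + Qq • γ (k+1) + (0:ℤ) • ℓ k = P • γ k + Qq • γ (k+1) := by module
          _ = s • γ (k+1) := es
          _ = (0:ℤ) • γ k + s • γ (k+1) + (0:ℤ) • ℓ k := by module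
      rcases hs with rfl | rfl <;> rcases hco2 with h | ⟨h1, h2⟩ <;> omega
    have hI := gkm3_i3 h₃ (G.bar (g k)) (g (k+1)) r (hbarne k) (Ne.symm hne1)
      (Ne.symm hne2) (hgsrc k) hr
    obtain ⟨t₁, ht₁, et₁⟩ := pm_ex (hlabbar k)
    obtain ⟨t₂, ht₂, et₂⟩ := pm_ex (hγpm (k+1))
    obtain ⟨t₃, ht₃, et₃⟩ := pm_ex hpm
    have hγk : γ k = (-t₁) • A.label (G.bar (g k)) := by rw [neg_smul, ← et₁, neg_neg]
    have h0 : (-(t₃ * P * t₁)) • A.label (G.bar (g k)) + (t₃ * Qq * t₂) • A.label (g (k+1))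
        + (-1:ℤ) • A.label r = 0 := by
      rw [show A.label r = t₃ • (P • γ k + Qq • γ (k+1)) from sflip ht₃ et₃, hγk, et₂]
      module
    have := (hI _ _ _ h0).2.2
    omega
  -- weight transport along an arbitrary edge based at a hexagon vertex
  have htrans : ∀ k (u : G.E), G.src u = G.tgt (g k) →
      ∃ cc : ℤ, ∃ lw, lw = ℓ k + cc • A.label u ∧
        QCompat G A.label Q.lam Q.qpair (G.tgt u) [(G.bar u, -(Lf k u))] lw := by
    intro k u hu
    have hq1 : QCompat G A.label Q.lam Q.qpair (G.src u) [(u, Lf k u)] (ℓ k) := by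
      rw [hu]
      refine ⟨Lf k, hfam k, ?_⟩
      intro pp hpp
      simp only [List.mem_singleton] at hpp
      subst hpp
      rfl
    obtain ⟨lw, ⟨cc, hlw⟩, hQw, -⟩ := hcm u (Lf k u) (ℓ k) hq1
    exact ⟨cc, lw, hlw, hQw⟩
  have hc' : ∀ k, ℓ (k+2) = ℓ (k+1) + c (k+1) • γ (k+2) := fun k => hc (k+1)
  -- if B (k+1) is a triangle then c k = -1 and u has label ± (ℓ k - γ (k+2))
  have hstep : ∀ k, PM (γ (k+2)) (Q.lam (G.tgt (Q.qpair (g (k+2))))) →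
      c k = -1 ∧ ∃ u : G.E, G.src u = G.tgt (g k) ∧
        G.tgt u = G.tgt (Q.qpair (g (k+2))) ∧ PM (ℓ k - γ (k+2)) (A.label u) := by
    intro k hlamx
    obtain ⟨τ, hτ, u, hus, hut, hupm⟩ := hLD k
    obtain ⟨cc, lw, hlw, hQw⟩ := htrans k u hus
    obtain ⟨M, hMfam, -⟩ := hQw
    have hpmlw : PM lw (Q.lam (G.tgt u)) := hMfam.1
    rw [hut] at hpmlw
    obtain ⟨sw, hsw, ew⟩ := pm_pm hpmlw hlamx
    obtain ⟨su, hsu, eu⟩ := pm_ex hupm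
    have hlab : A.label u = su • (γ (k+1) - τ • (ℓ (k+1) - γ (k+2))) := sflip hsu eu
    have hco : -sw = -(cc * su * τ) ∧ sw = cc * su * (1 - τ * c k + τ) ∧
        (0:ℤ) = 1 - cc * su * τ := by
      apply (hI3 k).coords
      calc (-sw) • γ k + sw • γ (k+1) + (0:ℤ) • ℓ k
          = sw • γ (k+2) := by rw [hγrec k]; module
        _ = lw := ew.symm
        _ = ℓ k + cc • A.label u := hlw
        _ = (-(cc * su * τ)) • γ k + (cc * su * (1 - τ * c k + τ)) • γ (k+1)
            + (1 - cc * su * τ) • ℓ k := by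
          rw [hlab, hc k, hγrec k]
          module
    have hkey : c k = -1 ∧ τ = -1 := by
      obtain ⟨E1, E2, E3⟩ := hco
      have hckv := hcval k
      rcases hτ with rfl | rfl <;> rcases hsu with rfl | rfl
      · exfalso
        have hcc : cc = 1 := by omega
        rw [hcc] at E2
        ring_nf at E2
        omega
      · exfalso
        have hcc : cc = -1 := by omega
        rw [hcc] at E2
        ring_nf at E2
        omega
      · have hcc : cc = -1 := by omega
        rw [hcc] at E1 E2
        ring_nf at E1 E2
        exact ⟨by omega, rfl⟩
      · have hcc : cc = 1 := by omega
        rw [hcc] at E1 E2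
        ring_nf at E1 E2
        exact ⟨by omega, rfl⟩
    refine ⟨hkey.1, u, hus, hut, ?_⟩
    have hvec : γ (k+1) - τ • (ℓ (k+1) - γ (k+2)) = ℓ k - γ (k+2) := by
      rw [hkey.2, hc k, hkey.1, hγrec k]; module
    rwa [hvec] at hupm
  -- biangle analogue
  have hstepBi : ∀ k, c k = -2 → c (k+1) = -2 →
      G.tgt (Q.qpair (g (k+2))) = G.tgt (g (k+2)) →
      ∃ u : G.E, G.src u = G.tgt (g k) ∧ G.tgt u = G.tgt (g (k+2)) ∧
        PM (ℓ k + γ k - (2:ℤ) • γ (k+1)) (A.label u) := by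
    intro k hck hck1 htq
    obtain ⟨τ, hτ, u, hus, hut, hupm⟩ := hLD k
    obtain ⟨cc, lw, hlw, hQw⟩ := htrans k u hus
    obtain ⟨M, hMfam, -⟩ := hQw
    have hpmlw : PM lw (Q.lam (G.tgt u)) := hMfam.1
    rw [hut, htq] at hpmlw
    obtain ⟨sw, hsw, ew⟩ := pm_pm hpmlw (hlamw (k+2))
    obtain ⟨su, hsu, eu⟩ := pm_ex hupm
    have hlab : A.label u = su • (γ (k+1) - τ • (ℓ (k+1) - γ (k+2))) := sflip hsu eu
    have hco : 2 * sw = -(cc * su * τ) ∧ -4 * sw = cc * su * (1 + 3 * τ) ∧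
        sw = 1 - cc * su * τ := by
      apply (hI3 k).coords
      calc (2 * sw) • γ k + (-4 * sw) • γ (k+1) + sw • ℓ k
          = sw • ℓ (k+2) := by
            rw [hc' k, hc k, hck, hck1, hγrec k]; module
        _ = lw := ew.symm
        _ = ℓ k + cc • A.label u := hlw
        _ = (-(cc * su * τ)) • γ k + (cc * su * (1 + 3 * τ)) • γ (k+1)
            + (1 - cc * su * τ) • ℓ k := by
          rw [hlab, hc k, hck, hγrec k]
          module
    have hτv : τ = -1 := by
      obtain ⟨E1, E2, E3⟩ := hco
      rcases hτ with rfl | rfl <;> rcases hsu with rfl | rfl <;>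
        rcases hsw with rfl | rfl <;> omega
    subst hτv
    refine ⟨u, hus, by rw [hut, htq], ?_⟩
    have hvec : γ (k+1) - (-1 : ℤ) • (ℓ (k+1) - γ (k+2)) = ℓ k + γ k - (2:ℤ) • γ (k+1) := by
      rw [hc k, hck, hγrec k]; module
    rwa [hvec] at hupm
  -- descending triangles
  have hdown : ∀ k, PM (γ (k+2)) (Q.lam (G.tgt (Q.qpair (g (k+2))))) →
      PM (γ (k+1)) (Q.lam (G.tgt (Q.qpair (g (k+1))))) := by
    intro k h
    have h1 := (hstep k h).1
    rcases hK k with ⟨-, h2⟩ | ⟨h2, -⟩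
    · exact h2
    · omega
  -- final case analysis
  rcases hK 0 with ⟨hc0, hT0⟩ | ⟨hc0, hB0⟩
  · -- all-triangle case
    have hT6 : PM (γ 7) (Q.lam (G.tgt (Q.qpair (g 7)))) := by
      rw [show γ 7 = γ 1 from hγ6 1, show g 7 = g 1 from hg6 1]
      exact hT0
    have hT1 : PM (γ 2) (Q.lam (G.tgt (Q.qpair (g 2)))) :=
      hdown 1 (hdown 2 (hdown 3 (hdown 4 (hdown 5 hT6))))
    obtain ⟨hck0, u, hus, hut, hulab⟩ := hstep 0 hT1
    have hpmLu : PM (Lf 0 u) (A.label u) := ((hfam 0).2 u hus).1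
    obtain ⟨ε, hε, eε⟩ := pm_pm hpmLu hulab
    have hLqu : Lf 0 (Q.qpair u) = ℓ 0 - Lf 0 u := by
      have h1 := ((hfam 0).2 u hus).2
      calc Lf 0 (Q.qpair u) = (Lf 0 u + Lf 0 (Q.qpair u)) - Lf 0 u := by module
        _ = ℓ 0 - Lf 0 u := by rw [h1]
    have hpmqu : PM (ℓ 0 - Lf 0 u) (A.label (Q.qpair u)) := by
      have h1 := ((hfam 0).2 (Q.qpair u) (by rw [Q.qpair_src]; exact hus)).1
      rwa [hLqu] at h1
    have hεv : ε = -1 := by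
      rcases hε with rfl | rfl
      · exfalso
        apply hspan2 0 (Q.qpair u) (-1) 1 (by rw [Q.qpair_src]; exact hus) ?_
          (Or.inl (by omega)) (Or.inl (by omega))
        have hv : (-1 : ℤ) • γ 0 + (1:ℤ) • γ 1 = ℓ 0 - Lf 0 u := by
          rw [eε, one_smul, hγrec 0]; module
        rw [hv]
        exact hpmqu
      · rfl
    have hLuv : Lf 0 u = -(ℓ 0 - γ 2) := by rw [eε, hεv]; module
    -- the quaternionic 2-face through u
    have hTsrc : G.src (Q.qpair u) = G.src u := Q.qpair_src u
    have hT0' : connPath G C₂ u (Q.qpair u) 0 = u := rfl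
    have hT1' : connPath G C₂ u (Q.qpair u) 1 = Q.qpair (G.bar u) := by
      rw [connPath_one, hcp _ _ rfl, C₂.map_self]
    have hquatT : IsQuatPath G Q (connPath G C₂ u (Q.qpair u)) := by
      apply quat_propagate Q C₂ hcp _ _ hTsrc
      rw [hT1', Q.qpair_invol, hT0']
    obtain ⟨N, hN⟩ := exists_minPeriod C₂ u (Q.qpair u) hTsrc
    have hTfc := (hfaces C₂ hcc u (Q.qpair u) hTsrc (Q.qpair_ne u) N hN).1 hquatT
    have hlamz : PM (γ 2) (Q.lam (G.tgt u)) := by rw [hut]; exact hT1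
    rcases hTfc with h2 | hTri
    · -- biangle: impossible
      subst h2
      have hTT2 : connPath G C₂ u (Q.qpair u) 2 = connPath G C₂ u (Q.qpair u) 0 := hN.1.2 0
      have hb1 := hquatT 1
      rw [hTT2, hT0'] at hb1
      have hT1b : connPath G C₂ u (Q.qpair u) 1 = G.bar (Q.qpair u) := by
        have h1 := congrArg G.bar hb1
        rw [G.bar_invol] at h1
        exact h1.symm
      obtain ⟨cc, lw, hlw, hQw⟩ := htrans 0 u hus
      obtain ⟨M, hMfam, hMlist⟩ := hQw
      have hMbar : M (G.bar u) = -(Lf 0 u) := hMlist (G.bar u, -(Lf 0 u)) (by simp)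
      have hMqb : M (Q.qpair (G.bar u)) = lw + Lf 0 u := by
        have h1 := (hMfam.2 (G.bar u) rfl).2
        rw [hMbar] at h1
        calc M (Q.qpair (G.bar u))
            = (-(Lf 0 u) + M (Q.qpair (G.bar u))) + Lf 0 u := by module
          _ = lw + Lf 0 u := by rw [h1]
      have hqb : Q.qpair (G.bar u) = G.bar (Q.qpair u) := by rw [← hT1', hT1b]
      have hpmMqb : PM (lw + Lf 0 u) (A.label (Q.qpair (G.bar u))) := by
        have h1 := (hMfam.2 (Q.qpair (G.bar u)) (by rw [Q.qpair_src]; rfl)).1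
        rwa [hMqb] at h1
      have hpm3 : PM (lw + Lf 0 u) (A.label (Q.qpair u)) := by
        rw [hqb] at hpmMqb
        exact pm_trans hpmMqb (A.label_bar _)
      have hpmlw : PM lw (Q.lam (G.tgt u)) := hMfam.1
      obtain ⟨sw, hsw, ew⟩ := pm_pm hpmlw hlamz
      obtain ⟨sb, hsb, eb⟩ := pm_pm hpm3 hpmqu
      have hco : -(sw+1) = sb ∧ (sw+1) = -sb ∧ (-1 : ℤ) = 2*sb := by
        apply (hI3 0).coords
        calc (-(sw+1)) • γ 0 + (sw+1) • γ 1 + (-1 : ℤ) • ℓ 0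
            = lw + Lf 0 u := by rw [ew, hLuv, hγrec 0]; module
          _ = sb • (ℓ 0 - Lf 0 u) := eb
          _ = sb • γ 0 + (-sb) • γ 1 + (2*sb) • ℓ 0 := by rw [hLuv, hγrec 0]; module
      omega
    · -- noncomplex triangle: impossible
      obtain ⟨hmin3, hquat3, a'', l'', hA0, hA1, hA2, hL0, hL1, hL2⟩ := hTri
      have hsrcT1 : G.src (connPath G C₂ u (Q.qpair u) 1) = G.tgt u := by
        rw [connPath_src G C₂ _ _ hTsrc 0, hT0']
      rw [hsrcT1] at hL1
      have hpmZ : PM (γ 2) (l'' - a'') := pm_trans hlamz hL1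
      obtain ⟨sZ, hsZ, eZ⟩ := pm_ex hpmZ
      obtain ⟨s5, hs5, e5⟩ := pm_ex hA2
      have hT3' : connPath G C₂ u (Q.qpair u) 3 = connPath G C₂ u (Q.qpair u) 0 :=
        hmin3.1.2 0
      have hsrcbt2 : G.src (G.bar (connPath G C₂ u (Q.qpair u) 2)) = G.tgt (g 0) := by
        rw [src_bar]
        have h1 := connPath_src G C₂ _ _ hTsrc 2
        rw [hT3', hT0'] at h1
        rw [← h1]
        exact hus
      have hv2 : (-(s5*sZ)) • γ 0 + (s5*sZ) • γ 1
          = s5 • (l'' - a'') := by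
        rw [sflip hsZ eZ, hγrec 0]
        module
      apply hspan2 0 (G.bar (connPath G C₂ u (Q.qpair u) 2)) (-(s5*sZ)) (s5*sZ) hsrcbt2 ?_
        (Or.inl (by rcases hs5 with rfl | rfl <;> rcases hsZ with rfl | rfl <;> norm_num))
        (Or.inl (by rcases hs5 with rfl | rfl <;> rcases hsZ with rfl | rfl <;> norm_num))
      rw [hv2]
      exact pm_trans (Or.inl e5.symm) (pm_swap (A.label_bar _))
  · -- all-biangle case
    rcases hK 1 with ⟨hc1', hT1'⟩ | ⟨hc1, hB1⟩
    · exfalso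
      have h1 := (hstep 0 hT1').1
      omega
    obtain ⟨u, hus, hut, hulab⟩ := hstepBi 0 hc0 hc1 hB1
    have hpmLu : PM (Lf 0 u) (A.label u) := ((hfam 0).2 u hus).1
    obtain ⟨ε, hε, eε⟩ := pm_pm hpmLu hulab
    have hLqu : Lf 0 (Q.qpair u) = ℓ 0 - Lf 0 u := by
      have h1 := ((hfam 0).2 u hus).2
      calc Lf 0 (Q.qpair u) = (Lf 0 u + Lf 0 (Q.qpair u)) - Lf 0 u := by module
        _ = ℓ 0 - Lf 0 u := by rw [h1]
    have hpmqu : PM (ℓ 0 - Lf 0 u) (A.label (Q.qpair u)) := by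
      have h1 := ((hfam 0).2 (Q.qpair u) (by rw [Q.qpair_src]; exact hus)).1
      rwa [hLqu] at h1
    have hεv : ε = -1 := by
      rcases hε with rfl | rfl
      · exfalso
        apply hspan2 0 (Q.qpair u) (-1) 2 (by rw [Q.qpair_src]; exact hus) ?_
          (Or.inl (by omega)) (Or.inl (by omega))
        have hv : (-1 : ℤ) • γ 0 + (2:ℤ) • γ 1 = ℓ 0 - Lf 0 u := by
          rw [eε, one_smul]; module
        rw [hv]
        exact hpmqu
      · rfl
    have hLuv : Lf 0 u = -(ℓ 0 + γ 0 - (2:ℤ) • γ 1) := by rw [eε, hεv]; module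
    have hℓ2 : ℓ 2 = ℓ 0 + (2:ℤ) • γ 0 - (4:ℤ) • γ 1 := by
      rw [hc' 0, hc 0, hc0, hc1, hγrec 0]; module
    -- the quaternionic 2-face through u
    have hTsrc : G.src (Q.qpair u) = G.src u := Q.qpair_src u
    have hT0' : connPath G C₂ u (Q.qpair u) 0 = u := rfl
    have hT1' : connPath G C₂ u (Q.qpair u) 1 = Q.qpair (G.bar u) := by
      rw [connPath_one, hcp _ _ rfl, C₂.map_self]
    have hquatT : IsQuatPath G Q (connPath G C₂ u (Q.qpair u)) := by
      apply quat_propagate Q C₂ hcp _ _ hTsrc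
      rw [hT1', Q.qpair_invol, hT0']
    obtain ⟨N, hN⟩ := exists_minPeriod C₂ u (Q.qpair u) hTsrc
    have hTfc := (hfaces C₂ hcc u (Q.qpair u) hTsrc (Q.qpair_ne u) N hN).1 hquatT
    have hlamz : PM (ℓ 2) (Q.lam (G.tgt u)) := by rw [hut]; exact hlamw 2
    rcases hTfc with h2 | hTri
    · -- biangle: impossible
      subst h2
      have hTT2 : connPath G C₂ u (Q.qpair u) 2 = connPath G C₂ u (Q.qpair u) 0 := hN.1.2 0
      have hb1 := hquatT 1
      rw [hTT2, hT0'] at hb1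
      have hT1b : connPath G C₂ u (Q.qpair u) 1 = G.bar (Q.qpair u) := by
        have h1 := congrArg G.bar hb1
        rw [G.bar_invol] at h1
        exact h1.symm
      obtain ⟨cc, lw, hlw, hQw⟩ := htrans 0 u hus
      obtain ⟨M, hMfam, hMlist⟩ := hQw
      have hMbar : M (G.bar u) = -(Lf 0 u) := hMlist (G.bar u, -(Lf 0 u)) (by simp)
      have hMqb : M (Q.qpair (G.bar u)) = lw + Lf 0 u := by
        have h1 := (hMfam.2 (G.bar u) rfl).2
        rw [hMbar] at h1
        calc M (Q.qpair (G.bar u))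
            = (-(Lf 0 u) + M (Q.qpair (G.bar u))) + Lf 0 u := by module
          _ = lw + Lf 0 u := by rw [h1]
      have hqb : Q.qpair (G.bar u) = G.bar (Q.qpair u) := by rw [← hT1', hT1b]
      have hpmMqb : PM (lw + Lf 0 u) (A.label (Q.qpair (G.bar u))) := by
        have h1 := (hMfam.2 (Q.qpair (G.bar u)) (by rw [Q.qpair_src]; rfl)).1
        rwa [hMqb] at h1
      have hpm3 : PM (lw + Lf 0 u) (A.label (Q.qpair u)) := by
        rw [hqb] at hpmMqb
        exact pm_trans hpmMqb (A.label_bar _)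
      have hpmlw : PM lw (Q.lam (G.tgt u)) := hMfam.1
      obtain ⟨sw, hsw, ew⟩ := pm_pm hpmlw hlamz
      obtain ⟨sb, hsb, eb⟩ := pm_pm hpm3 hpmqu
      have hco : 2*sw - 1 = sb ∧ -4*sw + 2 = -2*sb ∧ sw - 1 = 2*sb := by
        apply (hI3 0).coords
        calc (2*sw - 1) • γ 0 + (-4*sw + 2) • γ 1 + (sw - 1) • ℓ 0
            = lw + Lf 0 u := by rw [ew, hℓ2, hLuv]; module
          _ = sb • (ℓ 0 - Lf 0 u) := eb
          _ = sb • γ 0 + (-2*sb) • γ 1 + (2*sb) • ℓ 0 := by rw [hLuv]; module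
      omega
    · -- noncomplex triangle: impossible
      obtain ⟨hmin3, hquat3, a'', l'', hA0, hA1, hA2, hL0, hL1, hL2⟩ := hTri
      have hsrcT0 : G.src (connPath G C₂ u (Q.qpair u) 0) = G.tgt (g 0) := by
        rw [hT0']; exact hus
      rw [hsrcT0] at hL0
      have hsrcT1 : G.src (connPath G C₂ u (Q.qpair u) 1) = G.tgt u := by
        rw [connPath_src G C₂ _ _ hTsrc 0, hT0']
      rw [hsrcT1] at hL1
      have hA0' : PM (A.label u) a'' := by rw [hT0'] at hA0; exact hA0
      obtain ⟨sA, hsA, eA⟩ := pm_ex (pm_trans hulab hA0')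
      obtain ⟨sL, hsL, eL⟩ := pm_ex (pm_trans (hlamw 0) hL0)
      obtain ⟨sZ, hsZ, eZ⟩ := pm_ex (pm_trans hlamz hL1)
      have hco : (2:ℤ) = -(sZ*sA) ∧ (-4 : ℤ) = 2*(sZ*sA) ∧ (1:ℤ) = sZ*(sL-sA) := by
        apply (hI3 0).coords
        calc (2:ℤ) • γ 0 + (-4:ℤ) • γ 1 + (1:ℤ) • ℓ 0
            = ℓ 2 := by rw [hℓ2]; module
          _ = sZ • (l'' - a'') := eZ
          _ = (-(sZ*sA)) • γ 0 + (2*(sZ*sA)) • γ 1 + (sZ*(sL-sA)) • ℓ 0 := by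
            rw [sflip hsL eL, sflip hsA eA]
            module
      obtain ⟨E1, -, -⟩ := hco
      rcases hsZ with rfl | rfl <;> rcases hsA with rfl | rfl <;> omega

end GKMQ
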